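/- Let p be a positive integer, A a Noetherian commutative ring, M a finitely generated projective A-module, and θ : M → M an A-linear endomorphism with θ^p = 0. Then for every function c : {1,...,p−1} → ℕ, the set { 𝔭 ∈ Spec A : for all 1 ≤ s < p, the rank of (θ_𝔭)^s over κ(𝔭) equals c(s) } is a locally closed subset of the prime spectrum of A with the Zariski topology (i.e. the intersection of an open set and a closed set). -/

import Mathlib

/-- The residue field `κ(P)` of a prime `P` in `Spec A`: the residue field of the
localization of `A` at `P` (canonically the field of fractions of `A/P`). -/
abbrev PrimeSpectrum.residueFieldAt {A : Type*} [CommRing A] (P : PrimeSpectrum A) :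
    Type _ :=
  IsLocalRing.ResidueField (Localization.AtPrime P.asIdeal)

section AuxLemmas
open Matrix Module Set Submodule TensorProduct

variable {K : Type*} [Field K] {n k : ℕ}

/-- Any submatrix (with arbitrary, not necessarily injective, row/column selections)
has rank at most that of the original matrix. -/
lemma aux_submatrix_eq_mul (N : Matrix (Fin n) (Fin n) K) (f g : Fin k → Fin n) :
    N.submatrix f g =
      ((1 : Matrix (Fin n) (Fin n) K).submatrix f id) * N *
        ((1 : Matrix (Fin n) (Fin n) K).submatrix id g) := by
  ext i j
  simp [Matrix.mul_apply, Matrix.one_apply, Finset.sum_ite_eq, Finset.sum_ite_eq']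

lemma aux_rank_submatrix_le (N : Matrix (Fin n) (Fin n) K) (f g : Fin k → Fin n) :
    (N.submatrix f g).rank ≤ N.rank := by
  rw [aux_submatrix_eq_mul]
  calc ((1 : Matrix (Fin n) (Fin n) K).submatrix f id * N *
        (1 : Matrix (Fin n) (Fin n) K).submatrix id g).rank
      ≤ ((1 : Matrix (Fin n) (Fin n) K).submatrix f id * N).rank :=
        (Matrix.rank_mul_le _ _).trans inf_le_left
    _ ≤ N.rank := (Matrix.rank_mul_le _ _).trans inf_le_right

lemma aux_le_rank_of_minor_ne_zero (N : Matrix (Fin n) (Fin n) K) {f g : Fin k → Fin n}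
    (h : (N.submatrix f g).det ≠ 0) : k ≤ N.rank := by
  have hu : IsUnit (N.submatrix f g) :=
    (Matrix.isUnit_iff_isUnit_det _).2 (isUnit_iff_ne_zero.2 h)
  have hr := Matrix.rank_of_isUnit _ hu
  calc k = Fintype.card (Fin k) := (Fintype.card_fin k).symm
    _ = (N.submatrix f g).rank := hr.symm
    _ ≤ N.rank := aux_rank_submatrix_le N f g

/-- From a family spanning a subspace of dimension at least `k`, one can extract a
linearly independent subfamily of size `k`. -/
lemma aux_exists_comp_linearIndependent {V ι : Type*} [AddCommGroup V] [Module K V]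
    [Fintype ι] (v : ι → V) (k : ℕ)
    (h : k ≤ Module.finrank K (Submodule.span K (Set.range v))) :
    ∃ g : Fin k → ι, LinearIndependent K (v ∘ g) := by
  obtain ⟨b, hbsub, hbspan, hbli⟩ := exists_linearIndependent K (Set.range v)
  have hbfin : b.Finite := (Set.finite_range v).subset hbsub
  haveI := hbfin.fintype
  have hcard : Module.finrank K (Submodule.span K (Set.range v)) = Fintype.card b := by
    rw [← hbspan, finrank_span_set_eq_card hbli, Set.toFinset_card]
  have hk : Fintype.card (Fin k) ≤ Fintype.card b := by
    rwa [Fintype.card_fin, ← hcard]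
  obtain ⟨e⟩ := Function.Embedding.nonempty_of_card_le hk
  choose g hg using fun i : Fin k => hbsub (e i).2
  refine ⟨g, ?_⟩
  have hvg : v ∘ g = (fun x : b => (x : V)) ∘ e := funext fun i => hg i
  rw [hvg]
  exact hbli.comp e e.injective

/-- If `k ≤ rank N` over a field, then some `k × k` minor of `N` is nonzero. -/
lemma aux_exists_minor_ne_zero (N : Matrix (Fin n) (Fin n) K) (h : k ≤ N.rank) :
    ∃ f g : Fin k → Fin n, (N.submatrix f g).det ≠ 0 := by
  rw [Matrix.rank_eq_finrank_span_cols] at h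
  obtain ⟨g, hg⟩ := aux_exists_comp_linearIndependent Nᵀ k h
  set M₁ := N.submatrix id g with hM₁
  have hcols : M₁ᵀ = Nᵀ ∘ g := by ext j i; rfl
  have hrank : M₁.rank = k := by
    rw [Matrix.rank_eq_finrank_span_cols]
    change Module.finrank K (Submodule.span K (Set.range M₁ᵀ)) = k
    rw [hcols, finrank_span_eq_card hg, Fintype.card_fin]
  have h2 : k ≤ Module.finrank K (Submodule.span K (Set.range (M₁ : Fin n → Fin k → K))) := by
    have h3 := Matrix.rank_eq_finrank_span_row M₁
    rw [hrank] at h3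
    exact h3.le
  obtain ⟨f, hf⟩ := aux_exists_comp_linearIndependent (M₁ : Fin n → Fin k → K) k h2
  refine ⟨f, g, ?_⟩
  have hrows : (fun i => (N.submatrix f g) i) = (M₁ : Fin n → Fin k → K) ∘ f := by
    ext i j; rfl
  have hu : IsUnit (N.submatrix f g) := by
    rw [← Matrix.linearIndependent_rows_iff_isUnit]
    change LinearIndependent K (fun i => (N.submatrix f g) i)
    rw [hrows]; exact hf
  exact ((Matrix.isUnit_iff_isUnit_det _).1 hu).ne_zero

/-- Characterization of `rank N = r` over a field in terms of vanishing/nonvanishing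
of minors. -/
lemma aux_matrix_rank_eq_iff (N : Matrix (Fin n) (Fin n) K) (r : ℕ) :
    N.rank = r ↔ (∀ f g : Fin (r + 1) → Fin n, (N.submatrix f g).det = 0) ∧
      ∃ f g : Fin r → Fin n, (N.submatrix f g).det ≠ 0 := by
  constructor
  · intro h
    refine ⟨fun f g => ?_, aux_exists_minor_ne_zero N h.ge⟩
    by_contra hd
    have := aux_le_rank_of_minor_ne_zero N hd
    omega
  · rintro ⟨h1, f, g, hfg⟩
    have hge := aux_le_rank_of_minor_ne_zero N hfg
    have hle : N.rank ≤ r := by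
      by_contra hlt
      push_neg at hlt
      obtain ⟨f, g, hd⟩ := aux_exists_minor_ne_zero N hlt
      exact hd (h1 f g)
    omega

end AuxLemmas

lemma aux_algebraMap_residueFieldAt_eq_zero_iff {A : Type*} [CommRing A] (P : PrimeSpectrum A)
    (x : A) : algebraMap A P.residueFieldAt x = 0 ↔ x ∈ P.asIdeal := by
  rw [IsScalarTower.algebraMap_apply A (Localization.AtPrime P.asIdeal) P.residueFieldAt,
    IsLocalRing.ResidueField.algebraMap_eq, IsLocalRing.residue_eq_zero_iff,
    IsLocalization.AtPrime.to_map_mem_maximal_iff (Localization.AtPrime P.asIdeal) P.asIdeal]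

/-- The stratum of `Spec A` where the residue rank of a given matrix over `A` equals `r`
is locally closed: it is the intersection of the closed locus where all `(r+1)`-minors
vanish and the open locus where some `r`-minor does not vanish. -/
lemma aux_isLocallyClosed_matrix_stratum {A : Type*} [CommRing A] {n : ℕ}
    (N : Matrix (Fin n) (Fin n) A) (r : ℕ) :
    IsLocallyClosed {P : PrimeSpectrum A |
      (N.map (algebraMap A P.residueFieldAt)).rank = r} := by
  refine ⟨(PrimeSpectrum.zeroLocus {x | ∃ f g : Fin r → Fin n, x = (N.submatrix f g).det})ᶜ,
    PrimeSpectrum.zeroLocus {x | ∃ f g : Fin (r + 1) → Fin n, x = (N.submatrix f g).det},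
    (PrimeSpectrum.isClosed_zeroLocus _).isOpen_compl, PrimeSpectrum.isClosed_zeroLocus _, ?_⟩
  ext P
  have hdet : ∀ (k : ℕ) (f g : Fin k → Fin n),
      ((N.map (algebraMap A P.residueFieldAt)).submatrix f g).det = 0
        ↔ (N.submatrix f g).det ∈ P.asIdeal := by
    intro k f g
    rw [Matrix.submatrix_map, ← RingHom.mapMatrix_apply, ← RingHom.map_det,
      aux_algebraMap_residueFieldAt_eq_zero_iff]
  simp only [Set.mem_setOf_eq, Set.mem_inter_iff, Set.mem_compl_iff,
    PrimeSpectrum.mem_zeroLocus, aux_matrix_rank_eq_iff, Set.subset_def, Set.mem_setOf_eq,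
    SetLike.mem_coe]
  constructor
  · rintro ⟨h1, f, g, hfg⟩
    refine ⟨?_, ?_⟩
    · intro hall
      exact hfg ((hdet r f g).2 (hall _ ⟨f, g, rfl⟩))
    · rintro x ⟨f, g, rfl⟩
      exact (hdet (r + 1) f g).1 (h1 f g)
  · rintro ⟨h2, h1⟩
    refine ⟨fun f g => (hdet (r + 1) f g).2 (h1 _ ⟨f, g, rfl⟩), ?_⟩
    push_neg at h2
    obtain ⟨x, ⟨f, g, rfl⟩, hx⟩ := h2
    exact ⟨f, g, fun h0 => hx ((hdet r f g).1 h0)⟩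

open TensorProduct in
/-- The rank of the base change of an endomorphism of a module `M` presented as a
retract of `Fin n → A` equals the residue rank of the associated matrix. -/
lemma aux_finrank_range_baseChange_eq {A M : Type*} [CommRing A] [AddCommGroup M] [Module A M]
    (B : Type*) [CommRing B] [Algebra A B] {n : ℕ}
    (π : (Fin n → A) →ₗ[A] M) (i : M →ₗ[A] (Fin n → A)) (hπ : Function.Surjective π)
    (hi : π ∘ₗ i = LinearMap.id) (f : Module.End A M) :
    ((LinearMap.toMatrix (Pi.basisFun A (Fin n)) (Pi.basisFun A (Fin n))
        (i ∘ₗ f ∘ₗ π)).map (algebraMap A B)).rank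
      = Module.finrank B (LinearMap.range (f.baseChange B)) := by
  set b := Pi.basisFun A (Fin n)
  set bB := Algebra.TensorProduct.basis B b
  set F := i ∘ₗ f ∘ₗ π with hF
  have h1 : (LinearMap.toMatrix b b F).map (algebraMap A B)
      = LinearMap.toMatrix bB bB (F.baseChange B) :=
    (LinearMap.toMatrix_baseChange B F b b).symm
  rw [h1, Matrix.rank_eq_finrank_range_toLin _ bB bB, Matrix.toLin_toMatrix]
  have hcomp : F.baseChange B = (i.baseChange B) ∘ₗ ((f.baseChange B) ∘ₗ (π.baseChange B)) := by
    rw [hF, LinearMap.baseChange_comp, LinearMap.baseChange_comp]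
  have hπB : LinearMap.range (π.baseChange B) = ⊤ := by
    rw [LinearMap.range_eq_top]
    have h2 : Function.Surjective (π.lTensor B) := LinearMap.lTensor_surjective B hπ
    rwa [← LinearMap.baseChange_eq_ltensor] at h2
  have hiB : Function.Injective (i.baseChange B) := by
    have h : (π.baseChange B) ∘ₗ (i.baseChange B) = LinearMap.id := by
      rw [← LinearMap.baseChange_comp, hi, LinearMap.baseChange_id]
    exact Function.LeftInverse.injective (g := π.baseChange B)
      (fun x => LinearMap.congr_fun h x)
  rw [hcomp, LinearMap.range_comp, LinearMap.range_comp, hπB, Submodule.map_top]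
  exact (LinearEquiv.finrank_eq (Submodule.equivMapOfInjective _ hiB _)).symm

/-- A finite intersection of locally closed sets is locally closed. -/
lemma aux_isLocallyClosed_biInter {X ι : Type*} [TopologicalSpace X] (s : Finset ι)
    (f : ι → Set X) :
    (∀ j ∈ s, IsLocallyClosed (f j)) → IsLocallyClosed (⋂ j ∈ s, f j) := by
  classical
  induction s using Finset.induction_on with
  | empty =>
    intro _
    simp only [Finset.notMem_empty, Set.iInter_of_empty, Set.iInter_univ]
    exact ⟨Set.univ, Set.univ, isOpen_univ, isClosed_univ, by simp⟩
  | @insert a s ha ih =>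
    intro h
    rw [Finset.set_biInter_insert]
    exact (h a (Finset.mem_insert_self _ _)).inter
      (ih fun j hj => h j (Finset.mem_insert_of_mem hj))

/-- Let `A` be a Noetherian commutative ring, `M` a finitely generated projective
`A`-module, and `θ : M → M` an `A`-linear endomorphism with `θ^p = 0`.  Then for every
prescribed rank function `c`, the set of primes `P` at which the rank of `(θ_P)^s` over
`κ(P)` equals `c s` for all `1 ≤ s < p` is a locally closed subset of `Spec A` with the
Zariski topology. -/
theorem isLocallyClosed_rank_stratum (p : ℕ) (hp : 0 < p)
    (A : Type*) [CommRing A] [IsNoetherianRing A]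
    (M : Type*) [AddCommGroup M] [Module A M] [Module.Finite A M] [Module.Projective A M]
    (θ : Module.End A M) (hθ : θ ^ p = 0) (c : ℕ → ℕ) :
    IsLocallyClosed {P : PrimeSpectrum A | ∀ s : ℕ, 1 ≤ s → s < p →
      Module.finrank P.residueFieldAt
        (LinearMap.range ((θ.baseChange P.residueFieldAt) ^ s)) = c s} := by
  obtain ⟨n, π, hπ⟩ := Module.Finite.exists_fin' A M
  obtain ⟨i, hi⟩ := Module.projective_lifting_property π LinearMap.id hπ
  set N : ℕ → Matrix (Fin n) (Fin n) A := fun s =>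
    LinearMap.toMatrix (Pi.basisFun A (Fin n)) (Pi.basisFun A (Fin n)) (i ∘ₗ (θ ^ s) ∘ₗ π)
    with hN
  have key : ∀ (s : ℕ) (P : PrimeSpectrum A),
      Module.finrank P.residueFieldAt
        (LinearMap.range ((θ.baseChange P.residueFieldAt) ^ s))
      = ((N s).map (algebraMap A P.residueFieldAt)).rank := by
    intro s P
    rw [← LinearMap.baseChange_pow, hN,
      aux_finrank_range_baseChange_eq P.residueFieldAt π i hπ hi (θ ^ s)]
  have hset : {P : PrimeSpectrum A | ∀ s : ℕ, 1 ≤ s → s < p →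
      Module.finrank P.residueFieldAt
        (LinearMap.range ((θ.baseChange P.residueFieldAt) ^ s)) = c s}
      = ⋂ s ∈ Finset.Ico 1 p, {P : PrimeSpectrum A |
          ((N s).map (algebraMap A P.residueFieldAt)).rank = c s} := by
    ext P
    simp only [Set.mem_setOf_eq, Set.mem_iInter, Finset.mem_Ico]
    constructor
    · intro h s hs
      rw [← key]
      exact h s hs.1 hs.2
    · intro h s h1 h2
      rw [key]
      exact h s ⟨h1, h2⟩
  rw [hset]
  exact aux_isLocallyClosed_biInter _ _
    (fun s _ => aux_isLocallyClosed_matrix_stratum (N s) (c s))
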